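/- Let n be a natural number with n ≡ 2 (mod 8). For 0 ≤ k ≤ n/2 define the rational numbers c_k by: c_k = 0 if k is even, and c_k = 2·(−1)^((k−1)/2) · n · (∏_{λ=1}^{(k−1)/2} (n² − (4λ−2)²)) / (4^k · k!) if k is odd (the product being empty, hence 1, when k = 1). Then every c_k is an integer, and for all complex numbers x, y: x^n + y^n = ∑_{k=0}^{n/2} c_k · (x·y)^(n/2 − k) · (x² + y²)^k. -/

import Mathlib

open Finset Nat

def hcoef (m j : ℕ) : ℤ :=
  if m < 2 * j then 0
  else if j = 0 then (if m = 0 then 2 else 1)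
  else (-1)^j * ((m - j).choose j + (m - j - 1).choose (j - 1))

lemma hcoef_zero {m j : ℕ} (h : m < 2*j) : hcoef m j = 0 := by simp [hcoef, h]

lemma hcoef_zero' (m : ℕ) : hcoef (m+1) 0 = 1 := by simp [hcoef]

lemma hcoef_rec (m j : ℕ) : hcoef (m+2) (j+1) = hcoef (m+1) (j+1) - hcoef m j := by
  rcases lt_trichotomy m (2*j) with h | h | h
  · rw [hcoef_zero (by omega), hcoef_zero (by omega), hcoef_zero (by omega)]; ring
  · have h1 : hcoef (m+1) (j+1) = 0 := hcoef_zero (by omega)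
    have h2 : hcoef (m+2) (j+1) = (-1)^(j+1) * 2 := by
      rw [hcoef, if_neg (by omega), if_neg (by omega)]
      rw [show m + 2 - (j+1) = j + 1 from by omega]
      simp [Nat.choose_self]
    have h3 : hcoef m j = (-1)^j * 2 := by
      rcases Nat.eq_zero_or_pos j with hj | hj
      · subst hj; simp at h; simp [hcoef, h]
      · rw [hcoef, if_neg (by omega), if_neg (by omega)]
        rw [show m - j = j from by omega, Nat.choose_self, Nat.choose_self]
        push_cast; ring
    rw [h1, h2, h3]; ring
  · rcases Nat.eq_zero_or_pos j with hj | hj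
    · subst hj
      rw [hcoef, hcoef, hcoef, if_neg (by omega), if_neg (by omega), if_neg (by omega),
        if_neg (by omega), if_neg (by omega), if_pos rfl, if_neg (by omega)]
      rw [show m + 2 - (0+1) = m + 1 from by omega, show m + 1 - (0+1) = m from by omega]
      simp [Nat.choose_one_right]
      push_cast; ring
    · rw [hcoef, hcoef, hcoef, if_neg (by omega), if_neg (by omega), if_neg (by omega),
        if_neg (by omega), if_neg (by omega), if_neg (by omega)]
      rw [show m + 2 - (j+1) = (m - j) + 1 from by omega,
        show m + 1 - (j+1) = m - j from by omega]
      have p1 : (m - j + 1).choose (j + 1) = (m-j).choose j + (m-j).choose (j+1) :=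
        Nat.choose_succ_succ _ _
      have p2 : (m - j).choose j = (m-j-1).choose (j-1) + (m-j-1).choose j := by
        obtain ⟨a, ha⟩ : ∃ a, m - j - 1 = a := ⟨_, rfl⟩
        obtain ⟨b, hb⟩ : ∃ b, j - 1 = b := ⟨_, rfl⟩
        rw [ha, hb, show m - j = a + 1 from by omega, show j = b + 1 from by omega]
        exact Nat.choose_succ_succ _ _
      rw [show (m - j + 1) - 1 = m - j from by omega, show (j+1)-1 = j from by omega]
      rw [p1]
      nth_rewrite 1 [p2]
      push_cast
      ring

lemma dickson_like : ∀ (m : ℕ) (u v : ℂ),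
    u^m + v^m = ∑ j ∈ range (m/2 + 1), (hcoef m j : ℂ) * (u*v)^j * (u+v)^(m - 2*j) := by
  intro m
  induction m using Nat.twoStepInduction with
  | zero => intro u v; simp [hcoef]; norm_num
  | one => intro u v; simp [hcoef]
  | more m ih ih1 =>
    intro u v
    have key : u^(m+2) + v^(m+2) = (u+v)*(u^(m+1)+v^(m+1)) - (u*v)*(u^m+v^m) := by ring
    have hR : ∑ j ∈ range (m/2 + 1 + 1), (hcoef (m+2) j : ℂ) * (u*v)^j * (u+v)^(m+2-2*j)
        = ((∑ i ∈ range (m/2+1), (hcoef (m+1) (i+1) : ℂ) * (u*v)^(i+1) * (u+v)^(m-2*i))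
          - ∑ i ∈ range (m/2+1), (hcoef m i : ℂ) * (u*v)^(i+1) * (u+v)^(m-2*i))
          + (u+v)^(m+2) := by
      rw [Finset.sum_range_succ']
      have e0 : (hcoef (m+2) 0 : ℂ) = 1 := by
        rw [show m + 2 = (m+1)+1 from rfl, hcoef_zero']; norm_num
      rw [e0]
      have e1 : ∀ i ∈ range (m/2+1),
          (hcoef (m+2) (i+1) : ℂ) * (u*v)^(i+1) * (u+v)^(m+2-2*(i+1))
          = (hcoef (m+1) (i+1) : ℂ) * (u*v)^(i+1) * (u+v)^(m-2*i)
            - (hcoef m i : ℂ) * (u*v)^(i+1) * (u+v)^(m-2*i) := by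
        intro i _
        rw [hcoef_rec, show m+2-2*(i+1) = m - 2*i from by omega]
        push_cast
        ring
      rw [Finset.sum_congr rfl e1, Finset.sum_sub_distrib]
      norm_num
    have hB : (u*v) * (∑ j ∈ range (m/2 + 1), (hcoef m j : ℂ) * (u*v)^j * (u+v)^(m - 2*j))
        = ∑ i ∈ range (m/2+1), (hcoef m i : ℂ) * (u*v)^(i+1) * (u+v)^(m-2*i) := by
      rw [Finset.mul_sum]
      exact Finset.sum_congr rfl (fun i _ => by ring)
    have hA : (u+v) * (∑ j ∈ range ((m+1)/2 + 1), (hcoef (m+1) j : ℂ) * (u*v)^j * (u+v)^((m+1) - 2*j))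
        = (∑ i ∈ range (m/2+1), (hcoef (m+1) (i+1) : ℂ) * (u*v)^(i+1) * (u+v)^(m-2*i)) + (u+v)^(m+2) := by
      rw [Finset.mul_sum]
      have e2 : ∀ j ∈ range ((m+1)/2 + 1),
          (u+v) * ((hcoef (m+1) j : ℂ) * (u*v)^j * (u+v)^((m+1)-2*j))
          = (hcoef (m+1) j : ℂ) * (u*v)^j * (u+v)^(m+2-2*j) := by
        intro j hj
        rw [Finset.mem_range] at hj
        rw [show m+2-2*j = (m+1-2*j) + 1 from by omega, pow_succ]
        ring
      rw [Finset.sum_congr rfl e2, Finset.sum_range_succ', hcoef_zero']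
      have e3 : ∀ i ∈ range ((m+1)/2),
          (hcoef (m+1) (i+1) : ℂ) * (u*v)^(i+1) * (u+v)^(m+2-2*(i+1))
          = (hcoef (m+1) (i+1) : ℂ) * (u*v)^(i+1) * (u+v)^(m-2*i) := by
        intro i _; rw [show m+2-2*(i+1) = m-2*i from by omega]
      rw [Finset.sum_congr rfl e3]
      have e4 : ∑ i ∈ range ((m+1)/2), (hcoef (m+1) (i+1) : ℂ) * (u*v)^(i+1) * (u+v)^(m-2*i)
          = ∑ i ∈ range (m/2+1), (hcoef (m+1) (i+1) : ℂ) * (u*v)^(i+1) * (u+v)^(m-2*i) := by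
        rcases Nat.even_or_odd m with he | ho
        · obtain ⟨q, rfl⟩ := he
          rw [show (q+q)/2 + 1 = (q+q+1)/2 + 1 from by omega, Finset.sum_range_succ]
          have hz : (hcoef (q+q+1) ((q+q+1)/2+1) : ℂ) = 0 := by
            rw [hcoef_zero (by omega)]; norm_num
          rw [hz]
          ring
        · obtain ⟨q, rfl⟩ := ho
          rw [show (2*q+1+1)/2 = (2*q+1)/2 + 1 from by omega]
      rw [e4]
      push_cast
      ring
    rw [key, ih, ih1, show (m+2)/2 + 1 = m/2 + 1 + 1 from by omega, hR, hA, hB]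
    ring

lemma choose_ratio (e d : ℕ) :
    (d+2)*(d+3)*((e+d+4).choose (e+1) + (e+d+3).choose e)
    = (e+2)*(e+3+d)*((e+d+3).choose (e+2) + (e+d+2).choose (e+1)) := by
  have h1 : ((e+d+4).choose (e+1) : ℚ) = (e+d+4)! / ((e+1)! * (d+3)!) := by
    rw [Nat.cast_choose ℚ (by omega), show e+d+4-(e+1) = d+3 from by omega]
  have h2 : ((e+d+3).choose e : ℚ) = (e+d+3)! / (e ! * (d+3)!) := by
    rw [Nat.cast_choose ℚ (by omega), show e+d+3-e = d+3 from by omega]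
  have h3 : ((e+d+3).choose (e+2) : ℚ) = (e+d+3)! / ((e+2)! * (d+1)!) := by
    rw [Nat.cast_choose ℚ (by omega), show e+d+3-(e+2) = d+1 from by omega]
  have h4 : ((e+d+2).choose (e+1) : ℚ) = (e+d+2)! / ((e+1)! * (d+1)!) := by
    rw [Nat.cast_choose ℚ (by omega), show e+d+2-(e+1) = d+1 from by omega]
  have key : ((d:ℚ)+2)*((d:ℚ)+3)*(((e+d+4).choose (e+1) : ℚ) + ((e+d+3).choose e : ℚ))
      = ((e:ℚ)+2)*((e:ℚ)+3+(d:ℚ))*(((e+d+3).choose (e+2) : ℚ) + ((e+d+2).choose (e+1) : ℚ)) := by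
    rw [h1, h2, h3, h4]
    have f1 : ((e+d+4)! : ℚ) = ((e+d+4):ℚ)*((e+d+3):ℚ)*((e+d+2)! : ℚ) := by
      rw [show e+d+4 = (e+d+3)+1 from by omega, Nat.factorial_succ,
        show e+d+3 = (e+d+2)+1 from by omega, Nat.factorial_succ]
      push_cast; ring
    have f2 : ((e+d+3)! : ℚ) = ((e+d+3):ℚ)*((e+d+2)! : ℚ) := by
      rw [show e+d+3 = (e+d+2)+1 from by omega, Nat.factorial_succ]
      push_cast; ring
    have f3 : ((e+2)! : ℚ) = ((e:ℚ)+2)*((e:ℚ)+1)*(e ! : ℚ) := by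
      rw [show e+2 = (e+1)+1 from by omega, Nat.factorial_succ, Nat.factorial_succ]
      push_cast; ring
    have f4 : ((e+1)! : ℚ) = ((e:ℚ)+1)*(e ! : ℚ) := by
      rw [Nat.factorial_succ]; push_cast; ring
    have f5 : ((d+3)! : ℚ) = ((d:ℚ)+3)*((d:ℚ)+2)*((d+1)! : ℚ) := by
      rw [show d+3 = (d+2)+1 from by omega, Nat.factorial_succ,
        show d+2 = (d+1)+1 from by omega, Nat.factorial_succ]
      push_cast; ring
    rw [f1, f2, f3, f4, f5]
    have n1 : ((e+d+2)! : ℚ) ≠ 0 := by positivity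
    have n2 : ((d+1)! : ℚ) ≠ 0 := by positivity
    have n3 : (e ! : ℚ) ≠ 0 := by positivity
    have n4 : ((e:ℚ)+1) ≠ 0 := by positivity
    field_simp
    push_cast
    ring
  exact_mod_cast key

lemma hcoef_ratio (i d : ℕ) :
    ((d:ℤ)+2)*((d:ℤ)+3) * hcoef (2*i+3+d) i
    = -(((i:ℤ)+1) * ((i:ℤ)+2+(d:ℤ))) * hcoef (2*i+3+d) (i+1) := by
  rcases Nat.eq_zero_or_pos i with hi | hi
  · subst hi
    rw [show 2*0+3+d = (3+d) from by omega]
    have h0 : hcoef (3+d) 0 = 1 := by simp [hcoef]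
    have h1 : hcoef (3+d) 1 = -((d:ℤ)+3) := by
      rw [hcoef, if_neg (by omega), if_neg (by omega)]
      rw [show 3+d-1 = d+2 from by omega, show d+2-1 = d+1 from by omega]
      norm_num [Nat.choose_one_right]
      push_cast; ring
    rw [h0, h1]
    push_cast; ring
  · obtain ⟨e, rfl⟩ : ∃ e, i = e + 1 := ⟨i-1, by omega⟩
    have hL : hcoef (2*(e+1)+3+d) (e+1)
        = (-1)^(e+1) * ((e+d+4).choose (e+1) + (e+d+3).choose e) := by
      rw [hcoef, if_neg (by omega), if_neg (by omega)]
      rw [show 2*(e+1)+3+d-(e+1) = e+d+4 from by omega,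
        show e+d+4-1 = e+d+3 from by omega,
        show e+1-1 = e from by omega]
    have hR : hcoef (2*(e+1)+3+d) (e+1+1)
        = (-1)^(e+2) * ((e+d+3).choose (e+2) + (e+d+2).choose (e+1)) := by
      rw [hcoef, if_neg (by omega), if_neg (by omega)]
      rw [show 2*(e+1)+3+d-(e+1+1) = e+d+3 from by omega,
        show e+d+3-1 = e+d+2 from by omega,
        show e+1+1-1 = e+1 from by omega,
        show e+1+1 = e+2 from rfl]
    rw [hL, hR]
    have key := choose_ratio e d
    have keyz : ((d:ℤ)+2)*((d:ℤ)+3)*(((e+d+4).choose (e+1) : ℤ) + ((e+d+3).choose e : ℤ))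
        = ((e:ℤ)+2)*((e:ℤ)+3+(d:ℤ))*(((e+d+3).choose (e+2) : ℤ) + ((e+d+2).choose (e+1) : ℤ)) := by
      exact_mod_cast key
    push_cast
    push_cast at keyz
    rw [show e+2 = (e+1)+1 from rfl, pow_succ, pow_succ]
    linear_combination (-(-1:ℤ)^e) * keyz

lemma hcoef_base {m : ℕ} (hm : m % 4 = 1) : hcoef m ((m-1)/2) = (m : ℤ) := by
  rcases eq_or_ne m 1 with h1 | h1
  · subst h1; simp [hcoef]
  · obtain ⟨j, rfl⟩ : ∃ j, m = 2*j+1 := ⟨(m-1)/2, by omega⟩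
    have hj2 : j ≥ 2 := by omega
    rw [show (2*j+1-1)/2 = j from by omega]
    rw [hcoef, if_neg (by omega), if_neg (by omega)]
    rw [show 2*j+1-j = j+1 from by omega, show j+1-1 = j from by omega]
    rw [Nat.choose_succ_self_right]
    have hc : j.choose (j-1) = j := by
      obtain ⟨i, rfl⟩ : ∃ i, j = i+1 := ⟨j-1, by omega⟩
      rw [show i+1-1 = i from rfl, Nat.choose_succ_self_right]
    rw [hc]
    have hs : (-1:ℤ)^j = 1 := by
      rw [show j = 2*(j/2) from by omega, pow_mul]; norm_num
    rw [hs]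
    push_cast; ring

/-- The case `n ≡ 2 (mod 8)` of the Eight Levels Theorem. -/
theorem eight_levels_mod8_two (n : ℕ) (hn : n % 8 = 2) (c : ℕ → ℚ)
    (hc_even : ∀ k ≤ n / 2, k % 2 = 0 → c k = 0)
    (hc_odd : ∀ k ≤ n / 2, k % 2 = 1 →
      c k = 2 * (-1 : ℚ) ^ ((k - 1) / 2) * (n : ℚ) *
        (∏ l ∈ Finset.Icc 1 ((k - 1) / 2), ((n : ℚ) ^ 2 - (4 * (l : ℚ) - 2) ^ 2)) /
        (4 ^ k * (Nat.factorial k : ℚ))) :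
    (∀ k ≤ n / 2, ∃ z : ℤ, c k = (z : ℚ)) ∧
    ∀ x y : ℂ, x ^ n + y ^ n =
      ∑ k ∈ Finset.range (n / 2 + 1),
        (c k : ℂ) * (x * y) ^ (n / 2 - k) * (x ^ 2 + y ^ 2) ^ k := by
  set m := n / 2 with hmdef
  have hnm : n = 2 * m := by omega
  have hm4 : m % 4 = 1 := by omega
  have hnq : (n : ℚ) = 2 * (m : ℚ) := by exact_mod_cast congrArg (Nat.cast (R := ℚ)) hnm
  -- Part A: values of c
  have hA : ∀ t, 2*t+1 ≤ m → c (2*t+1) = ((hcoef m ((m-1)/2 - t) : ℤ) : ℚ) := by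
    intro t
    induction t with
    | zero =>
      intro _
      rw [show 2*0+1 = 1 from rfl, show (m-1)/2 - 0 = (m-1)/2 from by omega, hcoef_base hm4]
      rw [hc_odd 1 (by omega) (by norm_num)]
      rw [show (1-1)/2 = 0 from rfl]
      rw [Finset.Icc_eq_empty (by omega), Finset.prod_empty]
      rw [hnq]
      norm_num [Nat.factorial]
      ring
    | succ t ih =>
      intro ht
      have ih' := ih (by omega)
      obtain ⟨j, hj⟩ : ∃ j, m = 2*j+3+2*t := ⟨(m-1)/2 - (t+1), by omega⟩
      have hj1 : (m-1)/2 - (t+1) = j := by omega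
      have hj2 : (m-1)/2 - t = j + 1 := by omega
      rw [hj2] at ih'
      rw [show 2*(t+1)+1 = 2*t+3 from by omega, hj1]
      -- the ratio between hcoef m j and hcoef m (j+1)
      have hr0 := hcoef_ratio j (2*t)
      rw [← hj] at hr0
      have hr : ((2*(t:ℚ)+2))*(2*(t:ℚ)+3) * ((hcoef m j : ℤ) : ℚ)
          = -(((j:ℚ)+1) * ((j:ℚ)+2+2*(t:ℚ))) * ((hcoef m (j+1) : ℤ) : ℚ) := by
        exact_mod_cast hr0
      -- step relation between c (2t+3) and c (2t+1)
      have hstep : c (2*t+3) * (16*(2*(t:ℚ)+2)*(2*(t:ℚ)+3))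
          = c (2*t+1) * (-((n:ℚ)^2 - (4*(t:ℚ)+2)^2)) := by
        rw [hc_odd (2*t+3) (by omega) (by omega), hc_odd (2*t+1) (by omega) (by omega)]
        rw [show (2*t+3-1)/2 = t+1 from by omega, show (2*t+1-1)/2 = t from by omega]
        rw [Finset.prod_Icc_succ_top (by omega : 1 ≤ t+1)]
        have fe : ((2*t+3)! : ℚ) = (2*(t:ℚ)+3)*(2*(t:ℚ)+2)*(((2*t+1)!) : ℚ) := by
          rw [show 2*t+3 = (2*t+2)+1 from by omega, Nat.factorial_succ,
            show 2*t+2 = (2*t+1)+1 from by omega, Nat.factorial_succ]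
          push_cast; ring
        rw [fe]
        have h4 : (4:ℚ)^(2*t+3) = 4^(2*t+1)*16 := by
          rw [show 2*t+3 = (2*t+1)+2 from by omega, pow_add]; norm_num
        rw [h4]
        have hsg : ((-1:ℚ))^(t+1) = -(-1)^t := by rw [pow_succ]; ring
        rw [hsg]
        have nz1 : (((2*t+1)!) : ℚ) ≠ 0 := by positivity
        have nz2 : (4:ℚ)^(2*t+1) ≠ 0 := by positivity
        field_simp
        push_cast
        ring
      have hval : (n:ℚ)^2 - (4*(t:ℚ)+2)^2 = 16*((j:ℚ)+1)*((j:ℚ)+2+2*(t:ℚ)) := by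
        have : (n:ℚ) = 4*(j:ℚ)+6+4*(t:ℚ) := by
          have : n = 4*j+6+4*t := by omega
          exact_mod_cast congrArg (Nat.cast (R := ℚ)) this
        rw [this]; ring
      have hfin : c (2*t+3) * (16*(2*(t:ℚ)+2)*(2*(t:ℚ)+3))
          = ((hcoef m j : ℤ) : ℚ) * (16*(2*(t:ℚ)+2)*(2*(t:ℚ)+3)) := by
        rw [hstep, ih', hval]
        linear_combination (-16 : ℚ) * hr
      have hX : (16*(2*(t:ℚ)+2)*(2*(t:ℚ)+3)) ≠ 0 := by positivity
      exact mul_right_cancel₀ hX hfin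
  have hcfin : ∀ k ≤ m, k % 2 = 1 → c k = ((hcoef m ((m-k)/2) : ℤ) : ℚ) := by
    intro k hk hk1
    have := hA ((k-1)/2) (by omega)
    rw [show 2*((k-1)/2)+1 = k from by omega,
      show (m-1)/2 - (k-1)/2 = (m-k)/2 from by omega] at this
    exact this
  constructor
  · intro k hk
    rcases Nat.even_or_odd k with he | ho
    · exact ⟨0, by rw [hc_even k hk (Nat.even_iff.mp he)]; norm_num⟩
      -- note: Even k gives k % 2 = 0 via omega? need Even → %2=0
    · obtain ⟨q, rfl⟩ := ho
      exact ⟨hcoef m ((m-(2*q+1))/2), hcfin (2*q+1) hk (by omega)⟩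
  · intro x y
    have main := dickson_like m (x^2) (y^2)
    have hx : x ^ n + y ^ n = (x^2)^m + (y^2)^m := by
      rw [hnm, pow_mul, pow_mul]
    rw [hx, main]
    have hfilter : ∑ k ∈ Finset.range (m + 1),
          (c k : ℂ) * (x * y) ^ (m - k) * (x ^ 2 + y ^ 2) ^ k
        = ∑ k ∈ (Finset.range (m + 1)).filter (fun k => k % 2 = 1),
          (c k : ℂ) * (x * y) ^ (m - k) * (x ^ 2 + y ^ 2) ^ k := by
      symm
      apply Finset.sum_filter_of_ne
      intro k hk hne
      by_contra hodd
      rw [Finset.mem_range] at hk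
      rw [hc_even k (by omega) (by omega)] at hne
      simp at hne
    rw [hfilter]
    refine Finset.sum_nbij' (i := fun j => m - 2*j) (j := fun k => (m-k)/2) ?_ ?_ ?_ ?_ ?_
    · intro a ha
      rw [Finset.mem_range] at ha
      rw [Finset.mem_filter, Finset.mem_range]
      omega
    · intro a ha
      rw [Finset.mem_filter, Finset.mem_range] at ha
      rw [Finset.mem_range]
      omega
    · intro a ha
      rw [Finset.mem_range] at ha
      omega
    · intro a ha
      rw [Finset.mem_filter, Finset.mem_range] at ha
      omega
    · intro a ha
      rw [Finset.mem_range] at ha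
      rw [hcfin (m - 2*a) (by omega) (by omega),
        show (m - (m - 2*a))/2 = a from by omega,
        show m - (m - 2*a) = 2*a from by omega,
        pow_mul, mul_pow]
      push_cast
      ring
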